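/- arXiv:1011.6492 — 6 statements merged into one kernel-verified Lean document; each statement's English description precedes it below -/
import Mathlib

section
/- For a finite connected graph with trivial-holonomy magnetic potential A, the lowest eigenvalue of H_{1,1,A} is 0; conversely if there exists a nonzero f with Q_{1,A}(f) = 0, then the holonomy of A along every closed path is 0 mod 2π. In other words, |B| = 0 if and only if Hol_A = 0. -/
open Complex Finset

section helpers

variable {V : Type*} {G : SimpleGraph V}

/-- Sum of the magnetic potential along a walk. -/
def wSum (α : V → V → ℝ) : ∀ {a b : V}, G.Walk a b → ℝ
  | _, _, SimpleGraph.Walk.nil => 0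
  | _, _, @SimpleGraph.Walk.cons _ _ x y _ _ p => α x y + wSum α p

@[simp] lemma wSum_nil (α : V → V → ℝ) {a : V} :
    wSum α (SimpleGraph.Walk.nil : G.Walk a a) = 0 := rfl

@[simp] lemma wSum_cons (α : V → V → ℝ) {x y z : V} (h : G.Adj x y) (p : G.Walk y z) :
    wSum α (SimpleGraph.Walk.cons h p) = α x y + wSum α p := rfl

lemma wSum_append (α : V → V → ℝ) {a b c : V} (p : G.Walk a b) (q : G.Walk b c) :
    wSum α (p.append q) = wSum α p + wSum α q := by
  induction p with
  | nil => simp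
  | cons h p ih => simp [SimpleGraph.Walk.cons_append, ih, add_assoc]

lemma wSum_reverse (α : V → V → ℝ) (hα : ∀ x y, α x y = - α y x)
    {a b : V} (p : G.Walk a b) :
    wSum α p.reverse = - wSum α p := by
  induction p with
  | nil => simp
  | cons h p ih =>
      rw [SimpleGraph.Walk.reverse_cons, wSum_append, ih, wSum_cons, wSum_nil, wSum_cons]
      rw [hα]
      ring

lemma wSum_eq_finSum (α : V → V → ℝ) {a b : V} (p : G.Walk a b) :
    ∑ i : Fin p.length, α (p.getVert i) (p.getVert (i + 1)) = wSum α p := by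
  induction p with
  | nil => exact Fin.sum_univ_zero _
  | cons h p ih =>
      rw [wSum_cons, ← ih]
      rw [show (SimpleGraph.Walk.cons h p).length = p.length + 1 from rfl,
        Fin.sum_univ_succ]
      simp [SimpleGraph.Walk.getVert_cons_succ, SimpleGraph.Walk.getVert_zero]

end helpers

/-- |B| = 0 if and only if Hol_A = 0, where |B| is the lowest eigenvalue of H_{1,1,A},
i.e. the minimum of the Rayleigh quotient of Q_{1,A} on a finite connected graph. -/
theorem stmt5 {V : Type*} [Fintype V] [Nonempty V] (G : SimpleGraph V) [DecidableRel G.Adj]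
    (hG : G.Connected)
    (α : V → V → ℝ) (hα : ∀ x y, α x y = - α y x)
    (B : ℝ)
    (hB : IsLeast {r : ℝ | ∃ f : V → ℂ, (∑ x, ‖f x‖^2) = 1 ∧
        r = (1/2 : ℝ) * ∑ x, ∑ y, if G.Adj x y then
          ‖f x - Complex.exp (Complex.I * (α x y)) * f y‖^2 else 0} B) :
    B = 0 ↔
      ∀ (n : ℕ) (γ : Fin (n+1) → V), γ 0 = γ (Fin.last n) →
        (∀ i : Fin n, G.Adj (γ i.castSucc) (γ i.succ)) →
        ∃ k : ℤ, ∑ i : Fin n, α (γ i.castSucc) (γ i.succ) = 2 * Real.pi * k := by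
  constructor
  · -- forward direction
    intro hB0 n γ hclosed hadj
    obtain ⟨f, hnorm, hval⟩ := hB.1
    rw [hB0] at hval
    -- each summand vanishes
    have hterm : ∀ x y, G.Adj x y → f x = Complex.exp (Complex.I * (α x y)) * f y := by
      intro x y hxy
      have h0 : ∑ x, ∑ y, (if G.Adj x y then
          ‖f x - Complex.exp (Complex.I * (α x y)) * f y‖^2 else 0) = 0 := by
        nlinarith [hval]
      have hnn : ∀ x ∈ (Finset.univ : Finset V), (0:ℝ) ≤ ∑ y, (if G.Adj x y then
          ‖f x - Complex.exp (Complex.I * (α x y)) * f y‖^2 else 0) := by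
        intro x _
        apply Finset.sum_nonneg
        intro y _
        positivity
      have h1 := (Finset.sum_eq_zero_iff_of_nonneg hnn).mp h0 x (Finset.mem_univ x)
      have hnn2 : ∀ y ∈ (Finset.univ : Finset V), (0:ℝ) ≤ (if G.Adj x y then
          ‖f x - Complex.exp (Complex.I * (α x y)) * f y‖^2 else 0) := by
        intro y _; positivity
      have h2 := (Finset.sum_eq_zero_iff_of_nonneg hnn2).mp h1 y (Finset.mem_univ y)
      rw [if_pos hxy] at h2
      have : ‖f x - Complex.exp (Complex.I * (α x y)) * f y‖ = 0 := by
        nlinarith [norm_nonneg (f x - Complex.exp (Complex.I * (α x y)) * f y)]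
      have := norm_eq_zero.mp this
      linear_combination this
    -- norm of f is constant along the graph
    have hconst : ∀ x y : V, ‖f x‖ = ‖f y‖ := by
      have key : ∀ {x y : V} (p : G.Walk x y), ‖f x‖ = ‖f y‖ := by
        intro x y p
        induction p with
        | nil => rfl
        | cons h p ih =>
            rw [← ih, hterm _ _ h, norm_mul]
            rw [Complex.norm_exp]
            simp
      intro x y
      exact key ((hG x y).some)
    -- f is nonvanishing
    have hne : ∀ x, f x ≠ 0 := by
      intro x hx
      have : ∀ y, f y = 0 := by
        intro y
        have := hconst y x
        rw [hx, norm_zero] at this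
        exact norm_eq_zero.mp this
      rw [Finset.sum_eq_zero (fun y _ => by rw [this y, norm_zero]; norm_num)] at hnorm
      norm_num at hnorm
    -- telescoping along the path
    have tele : ∀ (m : ℕ) (δ : Fin (m+1) → V),
        (∀ i : Fin m, G.Adj (δ i.castSucc) (δ i.succ)) →
        f (δ 0) = Complex.exp (Complex.I *
          (∑ i : Fin m, α (δ i.castSucc) (δ i.succ) : ℝ)) * f (δ (Fin.last m)) := by
      intro m
      induction m with
      | zero =>
          intro δ _
          simp [Fin.last]
      | succ m ih =>
          intro δ hδ
          have h0 : G.Adj (δ 0) (δ 1) := by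
            have := hδ 0
            simpa using this
          have ht := ih (fun i => δ i.succ) (fun i => by
            have := hδ i.succ
            simpa only [Fin.succ_castSucc] using this)
          simp only [Fin.succ_zero_eq_one, Fin.succ_last, Fin.succ_castSucc] at ht
          rw [hterm _ _ h0, ht, Fin.sum_univ_succ]
          simp only [Fin.castSucc_zero, Fin.succ_zero_eq_one]
          push_cast
          rw [mul_add, Complex.exp_add]
          ring
    have := tele n γ hadj
    rw [← hclosed] at this
    have hexp : Complex.exp (Complex.I *
        (∑ i : Fin n, α (γ i.castSucc) (γ i.succ) : ℝ)) = 1 := by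
      have hne0 := hne (γ 0)
      have h2 : (Complex.exp (Complex.I *
          (∑ i : Fin n, α (γ i.castSucc) (γ i.succ) : ℝ)) - 1) * f (γ 0) = 0 := by
        linear_combination -this
      rcases mul_eq_zero.mp h2 with h | h
      · linear_combination h
      · exact absurd h hne0
    rw [Complex.exp_eq_one_iff] at hexp
    obtain ⟨k, hk⟩ := hexp
    refine ⟨k, ?_⟩
    have h3 : Complex.I * ((∑ i : Fin n, α (γ i.castSucc) (γ i.succ) : ℝ) : ℂ)
        = Complex.I * (2 * Real.pi * k) := by
      push_cast at hk ⊢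
      linear_combination hk
    have h4 := mul_left_cancel₀ Complex.I_ne_zero h3
    exact_mod_cast h4
  · -- backward direction
    intro hhol
    -- choose a base point and walks
    obtain ⟨x₀⟩ := (inferInstance : Nonempty V)
    have hwalk : ∀ x : V, G.Walk x₀ x := fun x => ((hG x₀ x).some)
    set θ : V → ℝ := fun x => - wSum α (hwalk x) with hθ
    -- holonomy of every closed walk is trivial
    have hcw : ∀ (p : G.Walk x₀ x₀), ∃ k : ℤ, wSum α p = 2 * Real.pi * k := by
      intro p
      have := hhol p.length (fun i => p.getVert i) ?_ ?_
      · obtain ⟨k, hk⟩ := this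
        refine ⟨k, ?_⟩
        rw [← wSum_eq_finSum α p, ← hk]
        apply Finset.sum_congr rfl
        intro i _
        rfl
      · simp [SimpleGraph.Walk.getVert_zero, Fin.last]
      · intro i
        exact p.adj_getVert_succ i.isLt
    -- compatibility of θ
    have hcompat : ∀ x y, G.Adj x y → ∃ k : ℤ, θ x = α x y + θ y + 2 * Real.pi * k := by
      intro x y hxy
      obtain ⟨k, hk⟩ := hcw ((hwalk x).append (SimpleGraph.Walk.cons hxy (hwalk y).reverse))
      refine ⟨-k, ?_⟩
      rw [wSum_append, wSum_cons, wSum_reverse α hα] at hk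
      have h1 : θ x = - wSum α (hwalk x) := rfl
      have h2 : θ y = - wSum α (hwalk y) := rfl
      rw [h1, h2]
      push_cast
      linarith
    -- define the ground state
    set c : ℝ := (Real.sqrt (Fintype.card V))⁻¹ with hc
    have hcard : (0:ℝ) < Fintype.card V := by
      exact_mod_cast Fintype.card_pos
    have hcpos : 0 < c := by
      rw [hc]
      positivity
    set f : V → ℂ := fun x => (c : ℂ) * Complex.exp (Complex.I * θ x) with hf
    have hfs : (∑ x, ‖f x‖^2) = 1 := by
      have hfx : ∀ x : V, ‖f x‖^2 = c^2 := by
        intro x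
        rw [hf]
        simp only [norm_mul]
        rw [Complex.norm_exp]
        simp [abs_of_pos hcpos]
      rw [Finset.sum_congr rfl (fun x _ => hfx x)]
      rw [Finset.sum_const, Finset.card_univ, nsmul_eq_mul, hc]
      rw [inv_pow, Real.sq_sqrt (le_of_lt hcard)]
      field_simp
    have hQ0 : (0:ℝ) ∈ {r : ℝ | ∃ f : V → ℂ, (∑ x, ‖f x‖^2) = 1 ∧
        r = (1/2 : ℝ) * ∑ x, ∑ y, if G.Adj x y then
          ‖f x - Complex.exp (Complex.I * (α x y)) * f y‖^2 else 0} := by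
      refine ⟨f, hfs, ?_⟩
      have hterm0 : ∀ x y, G.Adj x y →
          f x - Complex.exp (Complex.I * (α x y)) * f y = 0 := by
        intro x y hxy
        obtain ⟨k, hk⟩ := hcompat x y hxy
        have hexp : Complex.exp (Complex.I * ((θ x : ℝ) : ℂ)) =
            Complex.exp (Complex.I * ((α x y : ℝ) : ℂ)) *
              Complex.exp (Complex.I * ((θ y : ℝ) : ℂ)) := by
          rw [hk]
          rw [show Complex.I * ((α x y + θ y + 2 * Real.pi * (k:ℤ) : ℝ) : ℂ)
              = (Complex.I * ((α x y : ℝ) : ℂ) + Complex.I * ((θ y : ℝ) : ℂ))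
                + (k:ℤ) * (2 * (Real.pi:ℂ) * Complex.I) from by push_cast; ring]
          rw [Complex.exp_add, Complex.exp_add, Complex.exp_int_mul_two_pi_mul_I, mul_one]
        show (c:ℝ) * Complex.exp (Complex.I * ((θ x : ℝ):ℂ)) -
            Complex.exp (Complex.I * ((α x y:ℝ):ℂ)) *
              ((c:ℝ) * Complex.exp (Complex.I * ((θ y:ℝ):ℂ))) = 0
        rw [hexp]
        ring
      rw [Finset.sum_eq_zero, mul_zero]
      intro x _
      rw [Finset.sum_eq_zero]
      intro y _
      by_cases hxy : G.Adj x y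
      · rw [if_pos hxy, hterm0 x y hxy, norm_zero]
        norm_num
      · rw [if_neg hxy]
    have hle : B ≤ 0 := hB.2 hQ0
    have hge : 0 ≤ B := by
      obtain ⟨g, hg1, hg2⟩ := hB.1
      rw [hg2]
      apply mul_nonneg (by norm_num)
      apply Finset.sum_nonneg
      intro x _
      apply Finset.sum_nonneg
      intro y _
      positivity
    linarith
end

section
/- If Q_{1,A}(f) = 0 for a function f on a finite connected graph, then |f| is constant, and for every closed path x_0,...,x_n = x_0, f(x_0) = e^{−i Hol} f(x_0) where Hol is the sum of α along the path; hence if f ≠ 0 every holonomy is a multiple of 2π. -/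
open Complex Finset

/-- If Q_{1,A}(f) = 0 on a finite connected graph then |f| is constant,
f(x₀) = e^{−i·Hol} f(x₀) for every closed path based at x₀, and if f ≠ 0 then
every holonomy is a multiple of 2π. -/
theorem stmt6 {V : Type*} [Fintype V] (G : SimpleGraph V) [DecidableRel G.Adj]
    (hG : G.Connected)
    (α : V → V → ℝ) (hα : ∀ x y, α x y = - α y x)
    (f : V → ℂ)
    (hQ : ((1/2 : ℝ) * ∑ x, ∑ y, if G.Adj x y then
        ‖f x - Complex.exp (Complex.I * (α x y)) * f y‖^2 else 0) = 0) :
    (∀ x y, ‖f x‖ = ‖f y‖) ∧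
    (∀ (n : ℕ) (γ : Fin (n+1) → V), γ 0 = γ (Fin.last n) →
      (∀ i : Fin n, G.Adj (γ i.castSucc) (γ i.succ)) →
      f (γ 0) = Complex.exp (-Complex.I * (∑ i : Fin n, α (γ i.castSucc) (γ i.succ))) * f (γ 0)) ∧
    (f ≠ 0 →
      ∀ (n : ℕ) (γ : Fin (n+1) → V), γ 0 = γ (Fin.last n) →
        (∀ i : Fin n, G.Adj (γ i.castSucc) (γ i.succ)) →
        ∃ k : ℤ, ∑ i : Fin n, α (γ i.castSucc) (γ i.succ) = 2 * Real.pi * k) := by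
  have hS : ∑ x, ∑ y, (if G.Adj x y then
      ‖f x - Complex.exp (Complex.I * (α x y)) * f y‖^2 else 0) = 0 := by
    rcases mul_eq_zero.mp hQ with h | h
    · norm_num at h
    · exact h
  have hnn : ∀ x : V, ∀ y : V, (0:ℝ) ≤ (if G.Adj x y then
      ‖f x - Complex.exp (Complex.I * (α x y)) * f y‖^2 else 0) := by
    intro x y; split <;> positivity
  have hterm : ∀ x y : V, G.Adj x y →
      f x = Complex.exp (Complex.I * (α x y)) * f y := by
    intro x y hxy
    have h1 := (Finset.sum_eq_zero_iff_of_nonneg (fun x _ =>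
      Finset.sum_nonneg (fun y _ => hnn x y))).mp hS x (mem_univ x)
    have h2 := (Finset.sum_eq_zero_iff_of_nonneg (fun y _ => hnn x y)).mp h1 y (mem_univ y)
    rw [if_pos hxy] at h2
    have h3 : ‖f x - Complex.exp (Complex.I * (α x y)) * f y‖ = 0 := by
      nlinarith [norm_nonneg (f x - Complex.exp (Complex.I * (α x y)) * f y)]
    exact sub_eq_zero.mp (norm_eq_zero.mp h3)
  have hnormexp : ∀ r : ℝ, ‖Complex.exp (Complex.I * (r:ℂ))‖ = 1 := by
    intro r
    rw [Complex.norm_exp]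
    simp
  have hnormadj : ∀ x y : V, G.Adj x y → ‖f x‖ = ‖f y‖ := by
    intro x y hxy
    rw [hterm x y hxy, norm_mul, hnormexp, one_mul]
  have hnorm : ∀ x y : V, ‖f x‖ = ‖f y‖ := by
    intro x y
    obtain ⟨w⟩ := hG.preconnected x y
    induction w with
    | nil => rfl
    | cons h p ih => exact (hnormadj _ _ h).trans ih
  have hpath : ∀ (n : ℕ) (γ : Fin (n+1) → V),
      (∀ i : Fin n, G.Adj (γ i.castSucc) (γ i.succ)) →
      f (γ 0) = Complex.exp (Complex.I * (∑ i : Fin n, α (γ i.castSucc) (γ i.succ))) *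
        f (γ (Fin.last n)) := by
    intro n
    induction n with
    | zero =>
        intro γ _
        simp [Fin.last]
    | succ n ih =>
        intro γ hadj
        have h1 := ih (fun i => γ i.castSucc) (fun i => by
          have h := hadj i.castSucc
          rw [Fin.succ_castSucc] at h
          exact h)
        have h2 := hterm _ _ (hadj (Fin.last n))
        rw [Fin.succ_last] at h2
        have hsum : (∑ i : Fin (n+1), α (γ i.castSucc) (γ i.succ))
            = (∑ i : Fin n, α (γ i.castSucc.castSucc) (γ i.succ.castSucc))
              + α (γ (Fin.last n).castSucc) (γ (Fin.last (n+1))) := by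
          rw [Fin.sum_univ_castSucc
            (f := fun i : Fin (n+1) => α (γ i.castSucc) (γ i.succ)), Fin.succ_last]
          congr 1
        have h0 : γ (0 : Fin (n+1)).castSucc = γ 0 := by rw [Fin.castSucc_zero]
        rw [hsum]
        push_cast at h1 h2 ⊢
        rw [mul_add, Complex.exp_add, mul_assoc, ← h2, ← h0]
        exact h1
  have hclosed : ∀ (n : ℕ) (γ : Fin (n+1) → V), γ 0 = γ (Fin.last n) →
      (∀ i : Fin n, G.Adj (γ i.castSucc) (γ i.succ)) →
      f (γ 0) = Complex.exp (-Complex.I * (∑ i : Fin n, α (γ i.castSucc) (γ i.succ))) * f (γ 0) := by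
    intro n γ hcl hadj
    have h := hpath n γ hadj
    rw [← hcl] at h
    calc f (γ 0) = Complex.exp (-Complex.I * (∑ i : Fin n, α (γ i.castSucc) (γ i.succ))) *
          (Complex.exp (Complex.I * (∑ i : Fin n, α (γ i.castSucc) (γ i.succ))) * f (γ 0)) := by
            rw [← mul_assoc, ← Complex.exp_add]; ring_nf; simp
      _ = _ := by rw [← h]
  refine ⟨hnorm, hclosed, ?_⟩
  intro hf n γ hcl hadj
  have hfne : f (γ 0) ≠ 0 := by
    intro h0
    apply hf
    funext v
    have := hnorm v (γ 0)
    rw [h0, norm_zero, norm_eq_zero] at this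
    exact this
  have h := hclosed n γ hcl hadj
  set S : ℝ := ∑ i : Fin n, α (γ i.castSucc) (γ i.succ) with hSdef
  have hone : Complex.exp (-Complex.I * (S:ℂ)) = 1 := by
    have h' : Complex.exp (-Complex.I * (S:ℂ)) * f (γ 0) = 1 * f (γ 0) := by
      rw [one_mul, ← h]
    exact mul_right_cancel₀ hfne h'
  rw [Complex.exp_eq_one_iff] at hone
  obtain ⟨m, hm⟩ := hone
  refine ⟨-m, ?_⟩
  have h3 : (S:ℂ) = -(m:ℂ) * (2*(Real.pi:ℂ)) := by
    linear_combination Complex.I * hm + ((S:ℂ) + (m:ℂ)*2*(Real.pi:ℂ))*Complex.I_sq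
  have h4 : ((S:ℝ):ℂ) = ((2*Real.pi*((-m:ℤ):ℝ) : ℝ):ℂ) := by
    push_cast
    linear_combination h3
  exact_mod_cast h4
end

section
/- For the cyclic graph ℤ/Nℤ, the norm |B| of a magnetic field with holonomy Ω, namely min_{ξ^N=1} |1 − ξ e^{iΩ/N}|², is maximized over Ω when Ω = π, with maximal value |1 − e^{iπ/N}|². -/
open Complex

lemma norm_one_sub_exp_sq (θ : ℝ) :
    ‖1 - Complex.exp (Complex.I * θ)‖^2 = 2 - 2 * Real.cos θ := by
  rw [mul_comm, Complex.exp_mul_I]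
  have h : (1 : ℂ) - (Complex.cos θ + Complex.sin θ * Complex.I)
      = Complex.ofReal (1 - Real.cos θ) + Complex.ofReal (-Real.sin θ) * Complex.I := by
    push_cast [Complex.ofReal_cos, Complex.ofReal_sin]
    ring
  rw [h, Complex.sq_norm, Complex.normSq_add_mul_I]
  have := Real.sin_sq_add_cos_sq θ
  nlinarith

/-- The norm |B|(Ω) = |1 − e^{iδ(Ω)/N}|² (δ(Ω) = dist(Ω, 2πℤ)) of a magnetic field
on the cyclic graph ℤ/Nℤ is maximized at Ω = π, with maximal value |1 − e^{iπ/N}|². -/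
theorem stmt8 (N : ℕ) (hN : 1 ≤ N) :
    (∀ Ω δ : ℝ, IsLeast {d : ℝ | ∃ k : ℤ, d = |Ω - 2 * Real.pi * k|} δ →
      ‖1 - Complex.exp (Complex.I * (δ / N))‖^2
        ≤ ‖1 - Complex.exp (Complex.I * (Real.pi / N))‖^2) ∧
    IsLeast {d : ℝ | ∃ k : ℤ, d = |Real.pi - 2 * Real.pi * k|} Real.pi := by
  have hpi := Real.pi_pos
  have hN1 : (1:ℝ) ≤ N := by exact_mod_cast hN
  constructor
  · intro Ω δ ⟨hmem, hlb⟩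
    obtain ⟨k₀, hk₀⟩ := hmem
    have hδ0 : 0 ≤ δ := hk₀ ▸ abs_nonneg _
    -- δ ≤ π
    have hδπ : δ ≤ Real.pi := by
      have h1 : δ ≤ |Ω - 2 * Real.pi * round (Ω / (2 * Real.pi))| :=
        hlb ⟨round (Ω / (2 * Real.pi)), rfl⟩
      have h2 : |Ω - 2 * Real.pi * round (Ω / (2 * Real.pi))| ≤ Real.pi := by
        have hr := abs_sub_round (Ω / (2 * Real.pi))
        have h2pi : (0:ℝ) < 2 * Real.pi := by linarith
        have heq : Ω - 2 * Real.pi * round (Ω / (2 * Real.pi))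
            = 2 * Real.pi * (Ω / (2 * Real.pi) - round (Ω / (2 * Real.pi))) := by
          field_simp
        rw [heq, abs_mul, abs_of_pos h2pi]
        nlinarith
      linarith
    have e1 : ((δ:ℂ) / N) = ((δ / N : ℝ) : ℂ) := by push_cast; ring
    have e2 : ((Real.pi:ℂ) / N) = ((Real.pi / N : ℝ) : ℂ) := by push_cast; ring
    rw [e1, e2, norm_one_sub_exp_sq, norm_one_sub_exp_sq]
    have hcos : Real.cos (Real.pi / N) ≤ Real.cos (δ / N) := by
      apply Real.cos_le_cos_of_nonneg_of_le_pi
      · positivity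
      · rw [div_le_iff₀ (by linarith)]
        nlinarith
      · apply div_le_div_of_nonneg_right hδπ
        linarith
    linarith
  · constructor
    · exact ⟨0, by simp [abs_of_pos hpi]⟩
    · rintro d ⟨k, rfl⟩
      have : Real.pi - 2 * Real.pi * k = Real.pi * (1 - 2 * k) := by ring
      rw [this, abs_mul, abs_of_pos hpi]
      have h1 : (1:ℝ) ≤ |1 - 2 * (k:ℝ)| := by
        have : (1 - 2*k : ℤ) ≠ 0 := by omega
        have h : (1:ℤ) ≤ |1 - 2*k| := Int.one_le_abs this
        calc (1:ℝ) ≤ (|1 - 2*k| : ℤ) := by exact_mod_cast h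
          _ = |1 - 2 * (k:ℝ)| := by push_cast [Int.cast_abs]; ring_nf
      nlinarith
end

section
/- Agmon-type identity: if v satisfies Hv = 0 (weakly) on G and f : V → ℝ has finite support, then ⟨fv, H(fv)⟩ = (1/2) Σ_{x∈V} Σ_{y∼x} Re[v(x) conj(v(y)) C_{yx}] (f(x) − f(y))², where C_{yx} = c_{xy} e^{iα_{yx}}. -/
open Complex Finset

private lemma reC (z : ℂ) : ((z.re : ℝ) : ℂ) = (z + (starRingEnd ℂ) z) / 2 := by
  rw [Complex.add_conj]
  push_cast
  ring

/-- Agmon-type identity: if Hv = 0 and f is real-valued, then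
⟨fv, H(fv)⟩ = (1/2) Σ_x Σ_{y∼x} Re[v(x) conj(v(y)) C_{yx}] (f(x) − f(y))². -/
theorem stmt13 {V : Type*} [Fintype V] (G : SimpleGraph V) [DecidableRel G.Adj]
    (ω : V → ℝ) (c : V → V → ℝ) (α : V → V → ℝ)
    (hω : ∀ x, 0 < ω x)
    (hc : ∀ x y, G.Adj x y → 0 < c x y)
    (hcsymm : ∀ x y, c x y = c y x)
    (hα : ∀ x y, α x y = - α y x)
    (H : (V → ℂ) → (V → ℂ))
    (hH : ∀ u x, H u x = (1 / (ω x : ℂ)^2) *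
        ∑ y, if G.Adj x y then (c x y : ℂ) * (u x - Complex.exp (Complex.I * (α x y)) * u y) else 0)
    (v : V → ℂ) (hv : ∀ x, H v x = 0)
    (f : V → ℝ) :
    ∑ x, (ω x : ℂ)^2 * ((f x : ℂ) * v x) * (starRingEnd ℂ) (H (fun y => (f y : ℂ) * v y) x)
      = (((1/2 : ℝ) * ∑ x, ∑ y, if G.Adj x y then
          (v x * (starRingEnd ℂ) (v y) * ((c x y : ℂ) * Complex.exp (Complex.I * (α y x)))).re
            * (f x - f y)^2 else 0 : ℝ) : ℂ) := by
  classical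
  set A : V → V → ℂ := fun x y =>
    if G.Adj x y then v x * (starRingEnd ℂ) (v y) * ((c x y : ℂ) * Complex.exp (Complex.I * (α y x))) else 0 with hAdef
  have hω0 : ∀ x, ((ω x : ℝ) : ℂ) ≠ 0 := fun x => by
    exact_mod_cast (hω x).ne'
  have hαC : ∀ x y, ((α x y : ℝ) : ℂ) = -((α y x : ℝ) : ℂ) := fun x y => by
    rw [hα x y]; push_cast; ring
  have hexp : ∀ x y, (starRingEnd ℂ) (Complex.exp (Complex.I * (α x y)))
      = Complex.exp (Complex.I * (α y x)) := by
    intro x y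
    rw [← Complex.exp_conj, map_mul, Complex.conj_I, Complex.conj_ofReal, hαC x y]
    congr 1; ring
  have hA_swap : ∀ x y, A y x = (starRingEnd ℂ) (A x y) := by
    intro x y
    by_cases h : G.Adj x y
    · have h' : G.Adj y x := h.symm
      simp only [hAdef, h, h', if_true, map_mul, Complex.conj_conj, Complex.conj_ofReal,
        hexp x y, hexp y x, hcsymm x y]
      ring
    · have h' : ¬ G.Adj y x := fun hh => h hh.symm
      simp [hAdef, h, h']
  -- weak equation
  have hv' : ∀ x, ∑ y, (if G.Adj x y then (c x y : ℂ) *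
      (v x - Complex.exp (Complex.I * (α x y)) * v y) else 0) = 0 := by
    intro x
    have h := hv x
    rw [hH] at h
    rcases mul_eq_zero.mp h with h | h
    · exact absurd h (one_div_ne_zero (pow_ne_zero _ (hω0 x)))
    · exact h
  -- consequences of Hv = 0
  have P1 : ∀ x, ∑ y, (if G.Adj x y then (c x y : ℂ) * Complex.exp (Complex.I * (α x y)) * v y else 0)
      = v x * ∑ y, (if G.Adj x y then (c x y : ℂ) else 0) := by
    intro x
    have h := hv' x
    have expand : ∑ y, (if G.Adj x y then (c x y : ℂ) * (v x - Complex.exp (Complex.I * (α x y)) * v y) else 0)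
        = v x * (∑ y, (if G.Adj x y then (c x y : ℂ) else 0))
          - ∑ y, (if G.Adj x y then (c x y : ℂ) * Complex.exp (Complex.I * (α x y)) * v y else 0) := by
      rw [Finset.mul_sum, ← Finset.sum_sub_distrib]
      refine Finset.sum_congr rfl fun y _ => ?_
      by_cases hxy : G.Adj x y
      · simp only [hxy, if_true]; ring
      · simp [hxy]
    linear_combination expand - h
  have P2 : ∀ x, ∑ y, (if G.Adj x y then (c x y : ℂ) * Complex.exp (Complex.I * (α y x)) * (starRingEnd ℂ) (v y) else 0)
      = (starRingEnd ℂ) (v x) * ∑ y, (if G.Adj x y then (c x y : ℂ) else 0) := by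
    intro x
    have h := congrArg (starRingEnd ℂ) (P1 x)
    simpa [map_sum, apply_ite (starRingEnd ℂ), map_mul, Complex.conj_ofReal, hexp] using h
  have hrow : ∀ x, (∑ y, (starRingEnd ℂ) (A x y)) = ∑ y, A x y := by
    intro x
    have c1 : (∑ y, (starRingEnd ℂ) (A x y))
        = (starRingEnd ℂ) (v x) * (v x * ∑ y, (if G.Adj x y then (c x y : ℂ) else 0)) := by
      rw [← P1 x, Finset.mul_sum]
      refine Finset.sum_congr rfl fun y _ => ?_
      by_cases hxy : G.Adj x y
      · simp only [hAdef, hxy, if_true, map_mul, Complex.conj_conj, Complex.conj_ofReal, hexp]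
        ring
      · simp [hAdef, hxy]
    have c2 : (∑ y, A x y)
        = v x * ((starRingEnd ℂ) (v x) * ∑ y, (if G.Adj x y then (c x y : ℂ) else 0)) := by
      rw [← P2 x, Finset.mul_sum]
      refine Finset.sum_congr rfl fun y _ => ?_
      by_cases hxy : G.Adj x y
      · simp only [hAdef, hxy, if_true]; ring
      · simp [hAdef, hxy]
    rw [c1, c2]; ring
  -- pointwise computation of the quadratic form using Hv = 0
  have key : ∀ x, (ω x : ℂ)^2 * ((f x : ℂ) * v x) * (starRingEnd ℂ) (H (fun y => (f y : ℂ) * v y) x)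
      = ∑ y, A x y * (f x : ℂ) * ((f x : ℂ) - (f y : ℂ)) := by
    intro x
    have e0 : (ω x : ℂ)^2 * ((f x : ℂ) * v x) * (starRingEnd ℂ) (H (fun y => (f y : ℂ) * v y) x)
        = ∑ y, (f x : ℂ) * v x * (starRingEnd ℂ) (if G.Adj x y then (c x y : ℂ) *
            (((f x : ℂ) * v x) - Complex.exp (Complex.I * (α x y)) * ((f y : ℂ) * v y)) else 0) := by
      simp only [hH, map_mul, map_sum]
      rw [show (starRingEnd ℂ) (1 / (ω x:ℂ)^2) = 1/(ω x:ℂ)^2 by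
        simp [Complex.conj_ofReal]]
      rw [← Finset.mul_sum]
      have h0 := hω0 x
      field_simp
    have hterm : ∀ y ∈ (Finset.univ : Finset V),
        (f x : ℂ) * v x * (starRingEnd ℂ) (if G.Adj x y then (c x y : ℂ) *
            (((f x : ℂ) * v x) - Complex.exp (Complex.I * (α x y)) * ((f y : ℂ) * v y)) else 0)
          - A x y * (f x : ℂ) * ((f x : ℂ) - (f y : ℂ))
        = (f x : ℂ)^2 * v x * (starRingEnd ℂ) (if G.Adj x y then (c x y : ℂ) *
            (v x - Complex.exp (Complex.I * (α x y)) * v y) else 0) := by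
      intro y _
      by_cases hxy : G.Adj x y
      · simp only [hAdef, hxy, if_true, map_mul, map_sub, Complex.conj_ofReal, hexp]
        ring
      · simp [hAdef, hxy]
    rw [e0, ← sub_eq_zero, ← Finset.sum_sub_distrib, Finset.sum_congr rfl hterm,
      ← Finset.mul_sum, ← map_sum, hv' x]
    simp
  -- rewrite the LHS using the pointwise computation
  rw [Finset.sum_congr rfl fun x _ => key x]
  -- generic splitting lemmas
  have esub : ∀ (B : V → V → ℂ), (∑ x, ∑ y, B x y * (f x : ℂ) * ((f x : ℂ) - (f y : ℂ)))
      = (∑ x, ∑ y, B x y * ((f x : ℂ))^2) - (∑ x, ∑ y, B x y * ((f x : ℂ) * (f y : ℂ))) := by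
    intro B
    rw [← Finset.sum_sub_distrib]
    refine Finset.sum_congr rfl fun x _ => ?_
    rw [← Finset.sum_sub_distrib]
    exact Finset.sum_congr rfl fun y _ => by ring
  have esplit : ∀ (B : V → V → ℂ), (∑ x, ∑ y, B x y * ((f x : ℂ) - (f y : ℂ))^2)
      = (∑ x, ∑ y, B x y * ((f x : ℂ))^2) - 2 * (∑ x, ∑ y, B x y * ((f x : ℂ) * (f y : ℂ)))
        + (∑ x, ∑ y, B x y * ((f y : ℂ))^2) := by
    intro B
    rw [Finset.mul_sum, ← Finset.sum_sub_distrib, ← Finset.sum_add_distrib]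
    refine Finset.sum_congr rfl fun x _ => ?_
    rw [Finset.mul_sum, ← Finset.sum_sub_distrib, ← Finset.sum_add_distrib]
    exact Finset.sum_congr rfl fun y _ => by ring
  -- symmetry facts
  have ha : (∑ x, ∑ y, (starRingEnd ℂ) (A x y) * ((f x : ℂ))^2)
      = ∑ x, ∑ y, A x y * ((f x : ℂ))^2 := by
    refine Finset.sum_congr rfl fun x _ => ?_
    rw [← Finset.sum_mul, ← Finset.sum_mul, hrow x]
  have hb : (∑ x, ∑ y, A x y * ((f x : ℂ) * (f y : ℂ)))
      = ∑ x, ∑ y, (starRingEnd ℂ) (A x y) * ((f x : ℂ) * (f y : ℂ)) := by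
    rw [Finset.sum_comm]
    refine Finset.sum_congr rfl fun x _ => Finset.sum_congr rfl fun y _ => ?_
    rw [hA_swap x y]; ring
  have hd : (∑ x, ∑ y, A x y * ((f y : ℂ))^2)
      = ∑ x, ∑ y, (starRingEnd ℂ) (A x y) * ((f x : ℂ))^2 := by
    rw [Finset.sum_comm]
    refine Finset.sum_congr rfl fun x _ => Finset.sum_congr rfl fun y _ => ?_
    rw [hA_swap x y]
  have hd' : (∑ x, ∑ y, (starRingEnd ℂ) (A x y) * ((f y : ℂ))^2)
      = ∑ x, ∑ y, A x y * ((f x : ℂ))^2 := by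
    rw [Finset.sum_comm]
    refine Finset.sum_congr rfl fun x _ => Finset.sum_congr rfl fun y _ => ?_
    rw [hA_swap x y, Complex.conj_conj]
  -- convert the real right-hand side into complex double sums
  have t1 : (((1/2 : ℝ) * ∑ x, ∑ y, if G.Adj x y then
        (v x * (starRingEnd ℂ) (v y) * ((c x y : ℂ) * Complex.exp (Complex.I * (α y x)))).re
          * (f x - f y)^2 else 0 : ℝ) : ℂ)
      = ∑ x, ∑ y, ((A x y + (starRingEnd ℂ) (A x y)) / 4 * ((f x : ℂ) - (f y : ℂ))^2) := by
    rw [Complex.ofReal_mul, Complex.ofReal_sum, Finset.mul_sum]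
    refine Finset.sum_congr rfl fun x _ => ?_
    rw [Complex.ofReal_sum, Finset.mul_sum]
    refine Finset.sum_congr rfl fun y _ => ?_
    by_cases hxy : G.Adj x y
    · simp only [hAdef, hxy, if_true, Complex.ofReal_mul, Complex.ofReal_pow, Complex.ofReal_sub]
      rw [reC]
      push_cast
      ring
    · simp [hAdef, hxy]
  have t2 : (∑ x, ∑ y, ((A x y + (starRingEnd ℂ) (A x y)) / 4 * ((f x : ℂ) - (f y : ℂ))^2))
      = (1/4) * (∑ x, ∑ y, A x y * ((f x : ℂ) - (f y : ℂ))^2)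
        + (1/4) * (∑ x, ∑ y, (starRingEnd ℂ) (A x y) * ((f x : ℂ) - (f y : ℂ))^2) := by
    rw [Finset.mul_sum, Finset.mul_sum, ← Finset.sum_add_distrib]
    refine Finset.sum_congr rfl fun x _ => ?_
    rw [Finset.mul_sum, Finset.mul_sum, ← Finset.sum_add_distrib]
    exact Finset.sum_congr rfl fun y _ => by ring
  rw [t1, t2]
  linear_combination (esub A) - (1/4) * (esplit A)
    - (1/4) * (esplit (fun x y => (starRingEnd ℂ) (A x y)))
    - (1/4) * hd - (1/4) * hd' - (1/2) * ha - (1/2) * hb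
end

section
/- In ℤ/Nℤ viewed as a cyclic graph with constant magnetic phase Ω/N on each edge, for every f : ℤ/Nℤ → ℂ: Σ_{x} |f(x) − e^{iΩ/N} f(x+1)|² ≥ |1 − e^{iδ/N}|² Σ_x |f(x)|², where δ = dist(Ω, 2πℤ). -/
open Complex Finset

section helpers
open ZMod

variable {N : ℕ} [NeZero N]

lemma aux_norm_char (a : ZMod N) : ‖ZMod.stdAddChar a‖ = 1 := by
  rw [ZMod.stdAddChar_apply, Circle.norm_coe]

lemma aux_conj_char (a : ZMod N) :
    (starRingEnd ℂ) (ZMod.stdAddChar a) = ZMod.stdAddChar (-a) := by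
  have h1 : ZMod.stdAddChar a * ZMod.stdAddChar (-a) = 1 := by
    rw [← AddChar.map_add_eq_mul, add_neg_cancel, AddChar.map_zero_eq_one]
  have h2 : ZMod.stdAddChar a * (starRingEnd ℂ) (ZMod.stdAddChar a) = 1 := by
    rw [Complex.mul_conj]
    norm_cast
    rw [← Complex.sq_norm, aux_norm_char]
    norm_num
  have h3 : ZMod.stdAddChar a ≠ 0 := by
    intro h; rw [h, zero_mul] at h2; exact one_ne_zero h2.symm
  exact mul_left_cancel₀ h3 (h2.trans h1.symm)

lemma aux_parseval (Φ : ZMod N → ℂ) :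
    ∑ k : ZMod N, ‖ZMod.dft Φ k‖^2 = N * ∑ j : ZMod N, ‖Φ j‖^2 := by
  set F := ZMod.dft Φ with hF
  have key : ∀ j, ∑ k : ZMod N, ZMod.stdAddChar (j*k) * F k = (N : ℂ) * Φ j := by
    intro j
    have h := ZMod.invDFT_apply F j
    rw [hF, LinearEquiv.symm_apply_apply] at h
    simp only [smul_eq_mul] at h
    rw [h, ← mul_assoc, mul_inv_cancel₀ (Nat.cast_ne_zero.mpr (NeZero.ne N)), one_mul]
    apply Finset.sum_congr rfl; intro k _
    rw [mul_comm j k]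
  have main : (↑(∑ k : ZMod N, ‖F k‖^2) : ℂ) = (N : ℂ) * ↑(∑ j : ZMod N, ‖Φ j‖^2) := by
    push_cast
    have e1 : ∀ z : ℂ, (‖z‖:ℂ)^2 = (starRingEnd ℂ) z * z := by
      intro z
      rw [mul_comm, Complex.mul_conj, Complex.normSq_eq_norm_sq]
      push_cast; ring
    simp only [e1]
    calc ∑ k : ZMod N, (starRingEnd ℂ) (F k) * F k
        = ∑ k : ZMod N, (starRingEnd ℂ) (F k) * ∑ j : ZMod N, ZMod.stdAddChar (-(j*k)) * Φ j := by
          rfl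
      _ = ∑ j : ZMod N, (∑ k : ZMod N, (starRingEnd ℂ) (ZMod.stdAddChar (j*k) * F k)) * Φ j := by
          simp only [Finset.mul_sum, Finset.sum_mul]
          rw [Finset.sum_comm]
          apply Finset.sum_congr rfl; intro j _
          apply Finset.sum_congr rfl; intro k _
          rw [map_mul, aux_conj_char]
          ring
      _ = ∑ j : ZMod N, (starRingEnd ℂ) ((N:ℂ) * Φ j) * Φ j := by
          apply Finset.sum_congr rfl; intro j _
          rw [← map_sum, key]
      _ = (N:ℂ) * ∑ j : ZMod N, (starRingEnd ℂ) (Φ j) * Φ j := by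
          rw [Finset.mul_sum]
          apply Finset.sum_congr rfl; intro j _
          rw [map_mul, Complex.conj_natCast]
          ring
  exact_mod_cast main

lemma aux_shift (c : ℂ) (f : ZMod N → ℂ) (k : ZMod N) :
    ZMod.dft (fun x => f x - c * f (x+1)) k
      = (1 - c * ZMod.stdAddChar k) * ZMod.dft f k := by
  simp only [ZMod.dft_apply, smul_eq_mul]
  have h1 : ∑ j : ZMod N, ZMod.stdAddChar (-(j*k)) * (f j - c * f (j+1))
      = ∑ j : ZMod N, ZMod.stdAddChar (-(j*k)) * f j
        - c * ∑ j : ZMod N, ZMod.stdAddChar (-(j*k)) * f (j+1) := by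
    rw [Finset.mul_sum, ← Finset.sum_sub_distrib]
    apply Finset.sum_congr rfl; intro j _; ring
  rw [h1]
  have h2 : ∑ j : ZMod N, ZMod.stdAddChar (-(j*k)) * f (j+1)
      = ZMod.stdAddChar k * ∑ i : ZMod N, ZMod.stdAddChar (-(i*k)) * f i := by
    rw [Finset.mul_sum]
    apply Fintype.sum_equiv (Equiv.addRight (1 : ZMod N))
    intro j
    simp only [Equiv.coe_addRight]
    have : -(j * k) = k + -((j+1) * k) := by ring
    rw [this, AddChar.map_add_eq_mul]
    ring
  rw [h2]
  ring

lemma aux_normsq (t : ℝ) : ‖1 - Complex.exp (Complex.I * t)‖^2 = 2 - 2 * Real.cos t := by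
  rw [mul_comm, Complex.exp_mul_I, Complex.sq_norm, Complex.normSq_apply]
  simp only [Complex.sub_re, Complex.sub_im, Complex.one_re, Complex.one_im, Complex.add_re,
    Complex.add_im, Complex.mul_re, Complex.mul_im, Complex.I_re, Complex.I_im,
    Complex.cos_ofReal_re, Complex.cos_ofReal_im, Complex.sin_ofReal_re, Complex.sin_ofReal_im]
  nlinarith [Real.sin_sq_add_cos_sq t]

lemma aux_cos (N : ℕ) [NeZero N] (Omg dl : ℝ)
    (hδ : IsLeast {d : ℝ | ∃ k : ℤ, d = |Omg - 2 * Real.pi * k|} dl) (m : ℕ) :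
    Real.cos ((Omg + 2 * Real.pi * m) / N) ≤ Real.cos (dl / N) := by
  have hNpos : (0:ℝ) < N := Nat.cast_pos.mpr (Nat.pos_of_ne_zero (NeZero.ne N))
  have hδ0 : 0 ≤ dl := by obtain ⟨k, hk⟩ := hδ.1; rw [hk]; positivity
  set t : ℝ := (Omg + 2 * Real.pi * m) / N with ht
  set r : ℤ := round (t / (2 * Real.pi)) with hr
  set b : ℝ := |t - 2 * Real.pi * r| with hb
  have hpi := Real.pi_pos
  have h2 : t - 2 * Real.pi * r = 2 * Real.pi * (t / (2 * Real.pi) - r) := by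
    field_simp
  have hb1 : b ≤ Real.pi := by
    have h := abs_sub_round (t / (2 * Real.pi))
    rw [hb, h2, abs_mul, abs_of_pos (by positivity : (0:ℝ) < 2 * Real.pi)]
    nlinarith
  have hb2 : dl / N ≤ b := by
    have hk := hδ.2 ⟨(r * N - m : ℤ), rfl⟩
    have he' : Omg - 2 * Real.pi * ((r * N - m : ℤ) : ℝ) = N * (t - 2 * Real.pi * r) := by
      rw [ht]
      push_cast
      field_simp
      ring
    rw [he', abs_mul, abs_of_pos hNpos] at hk
    rw [div_le_iff₀ hNpos]
    calc dl ≤ N * |t - 2 * Real.pi * r| := hk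
      _ = b * N := by rw [hb]; ring
  have hcos : Real.cos t = Real.cos b := by
    rw [hb, Real.cos_abs]
    have h3 : t - 2 * Real.pi * r = t - r * (2 * Real.pi) := by ring
    rw [h3, Real.cos_sub_int_mul_two_pi]
  rw [hcos]
  exact Real.cos_le_cos_of_nonneg_of_le_pi (by positivity) hb1 hb2

lemma aux_eig (N : ℕ) [NeZero N] (Omg dl : ℝ)
    (hδ : IsLeast {d : ℝ | ∃ k : ℤ, d = |Omg - 2 * Real.pi * k|} dl) (k : ZMod N) :
    ‖1 - Complex.exp (Complex.I * (dl / N))‖^2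
      ≤ ‖1 - Complex.exp (Complex.I * (Omg / N)) * ZMod.stdAddChar k‖^2 := by
  have hN0 : (N:ℂ) ≠ 0 := Nat.cast_ne_zero.mpr (NeZero.ne N)
  have hcast : (((k.val : ℤ)) : ZMod N) = k := by
    push_cast
    exact ZMod.natCast_rightInverse k
  have hχ : ZMod.stdAddChar k
      = Complex.exp (2 * Real.pi * Complex.I * (k.val : ℕ) / N) := by
    rw [← hcast, ZMod.stdAddChar_coe]
    norm_num
  have hprod : Complex.exp (Complex.I * ((Omg:ℂ) / N)) * ZMod.stdAddChar k
      = Complex.exp (Complex.I * (((Omg + 2 * Real.pi * k.val) / N : ℝ) : ℂ)) := by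
    rw [hχ, ← Complex.exp_add]
    congr 1
    push_cast
    field_simp
  rw [hprod]
  have h1 : Complex.I * ((dl:ℂ) / N) = Complex.I * ((dl / N : ℝ) : ℂ) := by push_cast; ring
  rw [h1, aux_normsq, aux_normsq]
  have h2 := aux_cos N Omg dl hδ k.val
  linarith

end helpers

/-- On ℤ/Nℤ with constant magnetic phase Ω/N on each edge, for every f:
Σ_x |f(x) − e^{iΩ/N} f(x+1)|² ≥ |1 − e^{iδ/N}|² Σ_x |f(x)|², where δ = dist(Ω, 2πℤ). -/
theorem stmt16 (N : ℕ) [NeZero N] (hN : 1 ≤ N) (Ω δ : ℝ)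
    (hδ : IsLeast {d : ℝ | ∃ k : ℤ, d = |Ω - 2 * Real.pi * k|} δ)
    (f : ZMod N → ℂ) :
    ∑ x : ZMod N, ‖f x - Complex.exp (Complex.I * (Ω / N)) * f (x + 1)‖^2
      ≥ ‖1 - Complex.exp (Complex.I * (δ / N))‖^2 * ∑ x : ZMod N, ‖f x‖^2 := by
  have hNpos : (0:ℝ) < N := Nat.cast_pos.mpr (Nat.pos_of_ne_zero (NeZero.ne N))
  set c : ℂ := Complex.exp (Complex.I * (Ω / N)) with hc
  set lam : ℝ := ‖1 - Complex.exp (Complex.I * (δ / N))‖^2 with hlam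
  set g : ZMod N → ℂ := fun x => f x - c * f (x + 1) with hgdef
  have hg := aux_parseval g
  have hf := aux_parseval f
  have hineq : ∀ k : ZMod N, lam * ‖ZMod.dft f k‖^2 ≤ ‖ZMod.dft g k‖^2 := by
    intro k
    rw [hgdef, aux_shift, norm_mul, mul_pow]
    exact mul_le_mul_of_nonneg_right (aux_eig N Ω δ hδ k) (sq_nonneg _)
  have hmain : lam * ((N:ℝ) * ∑ j : ZMod N, ‖f j‖^2) ≤ (N:ℝ) * ∑ j : ZMod N, ‖g j‖^2 := by
    rw [← hf, ← hg, Finset.mul_sum]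
    exact Finset.sum_le_sum fun k _ => hineq k
  have : (N:ℝ) * (lam * ∑ j : ZMod N, ‖f j‖^2) ≤ (N:ℝ) * ∑ j : ZMod N, ‖g j‖^2 := by
    linarith [hmain]
  exact le_of_mul_le_mul_left this hNpos
end

section
/- The fundamental cycles form a basis: for a finite connected graph G with spanning tree T, every cycle γ ∈ Z₁(G) satisfies γ = Σ_{e ∈ E' ∩ supp(γ)} γ(e) γ_e, where E' is the set of non-tree edges and γ_e the fundamental cycle of e; in particular Z₁(G) is a free ℤ-module with basis {γ_e : e ∈ E'}. -/
open Finset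

/-- A 1-chain on a graph, represented as an antisymmetric ℤ-valued function on oriented
edges, is a cycle if it is supported on edges and has vanishing boundary. -/
def IsZCycle {V : Type*} [Fintype V] (G : SimpleGraph V) (η : V → V → ℤ) : Prop :=
  (∀ x y, η x y = - η y x) ∧ (∀ x y, η x y ≠ 0 → G.Adj x y) ∧ (∀ y, ∑ x, η x y = 0)

section Aux

open SimpleGraph

variable {V : Type*}

/-- In a tree, a vertex `v` has at most one neighbour at distance (from a fixed root `r`)
not exceeding that of `v`. -/
private lemma tree_parent {T : SimpleGraph V} (hT : T.IsTree) (r v u₁ u₂ : V)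
    (h1 : T.Adj u₁ v) (h2 : T.Adj u₂ v)
    (d1 : T.dist r u₁ ≤ T.dist r v) (d2 : T.dist r u₂ ≤ T.dist r v) : u₁ = u₂ := by
  have key : ∀ u : V, T.Adj u v → T.dist r u ≤ T.dist r v →
      ∃ P : T.Walk r v, P.IsPath ∧ P.reverse.getVert 1 = u := by
    classical
    intro u hu hd
    obtain ⟨q, hq, hlen⟩ := hT.isConnected.exists_path_of_dist r u
    have hv : v ∉ q.support := by
      intro hv
      have hvu : v ≠ u := (T.adj_symm hu).ne
      have hle : T.dist r v ≤ (q.takeUntil v hv).length := dist_le _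
      have hsum : (q.takeUntil v hv).length + (q.dropUntil v hv).length = q.length := by
        rw [← Walk.length_append, q.take_spec hv]
      have h3 : (q.dropUntil v hv).length = 0 := by omega
      exact hvu (Walk.eq_of_length_eq_zero h3)
    refine ⟨q.concat hu, ?_, ?_⟩
    · rw [← Walk.isPath_reverse_iff, Walk.reverse_concat]
      exact hq.reverse.cons (by simpa [Walk.support_reverse] using hv)
    · rw [Walk.reverse_concat]
      rw [Walk.getVert_cons_succ, Walk.getVert_zero]
  obtain ⟨P1, hP1, hu1⟩ := key u₁ h1 d1
  obtain ⟨P2, hP2, hu2⟩ := key u₂ h2 d2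
  have hPP : P1 = P2 :=
    congrArg Subtype.val (hT.IsAcyclic.path_unique ⟨P1, hP1⟩ ⟨P2, hP2⟩)
  rw [← hu1, ← hu2, hPP]

/-- An integral flow supported on a tree with vanishing divergence is zero. -/
private lemma treeFlow [Fintype V] {T : SimpleGraph V} (hT : T.IsTree) (ζ : V → V → ℤ)
    (hanti : ∀ x y, ζ x y = - ζ y x) (hsupp : ∀ x y, ζ x y ≠ 0 → T.Adj x y)
    (hdiv : ∀ y, ∑ x, ζ x y = 0) : ∀ u v, ζ u v = 0 := by
  classical
  by_contra hne
  push_neg at hne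
  obtain ⟨a, b, hab⟩ := hne
  have hA : ((univ : Finset V).filter (fun v => ∃ u, ζ u v ≠ 0)).Nonempty := by
    refine ⟨b, ?_⟩
    simp only [mem_filter, mem_univ, true_and]
    exact ⟨a, hab⟩
  obtain ⟨v, hvA, hmax⟩ := Finset.exists_max_image _ (fun v => T.dist a v) hA
  simp only [mem_filter, mem_univ, true_and] at hvA
  obtain ⟨u₀, hu₀⟩ := hvA
  have hadj0 : T.Adj u₀ v := hsupp _ _ hu₀
  have hmem : ∀ w, ζ w v ≠ 0 → T.dist a w ≤ T.dist a v := by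
    intro w hz
    refine hmax w ?_
    simp only [mem_filter, mem_univ, true_and]
    refine ⟨v, ?_⟩
    rw [hanti]
    simpa using hz
  have huniq : ∀ u, ζ u v ≠ 0 → u = u₀ := by
    intro u hu
    exact tree_parent hT a v u u₀ (hsupp _ _ hu) hadj0 (hmem u hu) (hmem u₀ hu₀)
  have hsum : ∑ x, ζ x v = ζ u₀ v := by
    apply Finset.sum_eq_single
    · intro x _ hx
      by_contra h
      exact hx (huniq x h)
    · intro h
      exact absurd (mem_univ u₀) h
  rw [hdiv v] at hsum
  exact hu₀ hsum.symm

open scoped Classical in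
/-- The key two-term computation: evaluating the fundamental-cycle double sum at a
non-tree pair `(u, v)` extracts twice the coefficient. -/
private lemma twoTerm [Fintype V] (G T : SimpleGraph V)
    (γ : V → V → (V → V → ℤ))
    (hγcyc : ∀ x y, G.Adj x y → ¬ T.Adj x y → IsZCycle G (γ x y))
    (hγone : ∀ x y, G.Adj x y → ¬ T.Adj x y → γ x y x y = 1)
    (hγanti : ∀ x y, γ y x = - γ x y)
    (hγsupp : ∀ x y, G.Adj x y → ¬ T.Adj x y → ∀ u v, γ x y u v ≠ 0 → ¬ T.Adj u v →
      (u = x ∧ v = y) ∨ (u = y ∧ v = x))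
    (c : V → V → ℤ) (hc : ∀ x y, c x y = - c y x)
    (hcsupp : ∀ x y, ¬ G.Adj x y → c x y = 0)
    (u v : V) (huv : ¬ T.Adj u v) :
    (∑ x, ∑ y, if G.Adj x y ∧ ¬ T.Adj x y then c x y * γ x y u v else 0) = 2 * c u v := by
  by_cases hne : u = v
  · subst hne
    have hcu : c u u = 0 := by have := hc u u; omega
    rw [hcu]
    rw [Finset.sum_eq_zero]
    · ring
    intro x _
    rw [Finset.sum_eq_zero]
    intro y _
    split_ifs with h
    · have := (hγcyc x y h.1 h.2).1 u u
      have hγ0 : γ x y u u = 0 := by omega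
      rw [hγ0, mul_zero]
    · rfl
  · -- u ≠ v
    have hzero : ∀ x y : V, ¬(x = u ∧ y = v) → ¬(x = v ∧ y = u) →
        (if G.Adj x y ∧ ¬ T.Adj x y then c x y * γ x y u v else 0) = 0 := by
      intro x y h1 h2
      split_ifs with h
      · by_cases hγ : γ x y u v = 0
        · rw [hγ, mul_zero]
        · rcases hγsupp x y h.1 h.2 u v hγ huv with ⟨hx, hy⟩ | ⟨hx, hy⟩
          · exact absurd ⟨hx.symm, hy.symm⟩ h1
          · exact absurd ⟨hy.symm, hx.symm⟩ h2
      · rfl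
    have hrow : ∀ x : V, x ≠ u → x ≠ v →
        (∑ y, if G.Adj x y ∧ ¬ T.Adj x y then c x y * γ x y u v else 0) = 0 := by
      intro x hxu hxv
      apply Finset.sum_eq_zero
      intro y _
      exact hzero x y (fun h => hxu h.1) (fun h => hxv h.1)
    have hstep : (∑ x, ∑ y, if G.Adj x y ∧ ¬ T.Adj x y then c x y * γ x y u v else 0) =
        (∑ y, if G.Adj u y ∧ ¬ T.Adj u y then c u y * γ u y u v else 0) +
        (∑ y, if G.Adj v y ∧ ¬ T.Adj v y then c v y * γ v y u v else 0) := by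
      have hpair := Finset.sum_pair
        (f := fun x => ∑ y, if G.Adj x y ∧ ¬ T.Adj x y then c x y * γ x y u v else 0) hne
      rw [← hpair]
      symm
      apply Finset.sum_subset (Finset.subset_univ _)
      intro x _ hx
      simp only [mem_insert, mem_singleton, not_or] at hx
      exact hrow x hx.1 hx.2
    have hrowu : (∑ y, if G.Adj u y ∧ ¬ T.Adj u y then c u y * γ u y u v else 0) =
        (if G.Adj u v ∧ ¬ T.Adj u v then c u v * γ u v u v else 0) := by
      apply Finset.sum_eq_single
      · intro y _ hy
        exact hzero u y (fun h => hy h.2) (fun h => hne h.1)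
      · intro h
        exact absurd (mem_univ v) h
    have hrowv : (∑ y, if G.Adj v y ∧ ¬ T.Adj v y then c v y * γ v y u v else 0) =
        (if G.Adj v u ∧ ¬ T.Adj v u then c v u * γ v u u v else 0) := by
      apply Finset.sum_eq_single
      · intro y _ hy
        exact hzero v y (fun h => hne h.1.symm) (fun h => hy h.2)
      · intro h
        exact absurd (mem_univ u) h
    rw [hstep, hrowu, hrowv]
    by_cases hG : G.Adj u v
    · rw [if_pos ⟨hG, huv⟩, if_pos ⟨hG.symm, fun h => huv h.symm⟩]
      have e1 : γ u v u v = 1 := hγone u v hG huv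
      have e2 : γ v u u v = -1 := by
        have := congrFun (congrFun (hγanti u v) u) v
        simp only [Pi.neg_apply] at this
        rw [this, e1]
      have e3 : c v u = - c u v := (hc v u).trans (by ring_nf)
      rw [e1, e2, e3]
      ring
    · rw [if_neg (fun h => hG h.1), if_neg (fun h => hG h.1.symm)]
      rw [hcsupp u v hG]
      ring

end Aux

open scoped Classical in
/-- The fundamental cycles γ_e (e a non-tree edge, for a spanning tree T of a finite
connected graph G) form a basis of Z₁(G): every cycle η decomposes as
η = Σ_{e∈E'} η(e) γ_e (each unoriented edge counted twice in the double sum), and the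
fundamental cycles are ℤ-linearly independent. -/
theorem stmt18 {V : Type*} [Fintype V] (G T : SimpleGraph V)
    (hTG : T ≤ G) (hT : T.IsTree)
    (γ : V → V → (V → V → ℤ))
    (hγcyc : ∀ x y, G.Adj x y → ¬ T.Adj x y → IsZCycle G (γ x y))
    (hγone : ∀ x y, G.Adj x y → ¬ T.Adj x y → γ x y x y = 1)
    (hγanti : ∀ x y, γ y x = - γ x y)
    (hγsupp : ∀ x y, G.Adj x y → ¬ T.Adj x y → ∀ u v, γ x y u v ≠ 0 → ¬ T.Adj u v →
      (u = x ∧ v = y) ∨ (u = y ∧ v = x)) :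
    (∀ η, IsZCycle G η → ∀ u v,
      (∑ x, ∑ y, if G.Adj x y ∧ ¬ T.Adj x y then η x y * γ x y u v else 0) = 2 * η u v) ∧
    (∀ cγ : V → V → ℤ, (∀ x y, cγ x y = - cγ y x) →
      (∀ x y, cγ x y ≠ 0 → G.Adj x y ∧ ¬ T.Adj x y) →
      (∀ u v, (∑ x, ∑ y, if G.Adj x y ∧ ¬ T.Adj x y then cγ x y * γ x y u v else 0) = 0) →
      cγ = 0) := by
  constructor
  · -- decomposition
    intro η hη u v
    obtain ⟨hηa, hηs, hηd⟩ := hη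
    set S : V → V → ℤ := fun u v =>
      ∑ x, ∑ y, if G.Adj x y ∧ ¬ T.Adj x y then η x y * γ x y u v else 0 with hS
    set ζ : V → V → ℤ := fun u v => S u v - 2 * η u v with hζ
    have hηG : ∀ x y, ¬ G.Adj x y → η x y = 0 := by
      intro x y h
      by_contra h'
      exact h (hηs x y h')
    have hSanti : ∀ u v, S v u = - S u v := by
      intro u v
      have : ∀ x y : V, (if G.Adj x y ∧ ¬ T.Adj x y then η x y * γ x y v u else 0) =
          -(if G.Adj x y ∧ ¬ T.Adj x y then η x y * γ x y u v else 0) := by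
        intro x y
        split_ifs with h
        · rw [(hγcyc x y h.1 h.2).1 v u]; ring
        · simp
      simp only [hS, this, Finset.sum_neg_distrib]
    have hSdiv : ∀ v, ∑ u, S u v = 0 := by
      intro v
      simp only [hS]
      rw [Finset.sum_comm]
      apply Finset.sum_eq_zero
      intro x _
      rw [Finset.sum_comm]
      apply Finset.sum_eq_zero
      intro y _
      by_cases h : G.Adj x y ∧ ¬ T.Adj x y
      · simp only [if_pos h, ← Finset.mul_sum, (hγcyc x y h.1 h.2).2.2 v, mul_zero]
      · simp [h]
    have hζ0 : ∀ u v, ζ u v = 0 := by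
      apply treeFlow hT
      · intro x y
        simp only [hζ]
        rw [hSanti y x, hηa x y]
        ring
      · intro x y hxy
        by_contra hTxy
        apply hxy
        simp only [hζ, hS]
        rw [twoTerm G T γ hγcyc hγone hγanti hγsupp η hηa hηG x y hTxy]
        ring
      · intro y
        simp only [hζ, Finset.sum_sub_distrib, hSdiv y, ← Finset.mul_sum, hηd y]
        ring
    have := hζ0 u v
    simp only [hζ, hS] at this
    omega
  · -- linear independence
    intro cγ hca hcs hsum
    funext u v
    show cγ u v = 0
    by_contra h
    obtain ⟨hG, hTuv⟩ := hcs u v h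
    have hcG : ∀ x y, ¬ G.Adj x y → cγ x y = 0 := by
      intro x y hxy
      by_contra h'
      exact hxy (hcs x y h').1
    have := twoTerm G T γ hγcyc hγone hγanti hγsupp cγ hca hcG u v hTuv
    rw [hsum u v] at this
    omega
end
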